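/- Let L be a first-order language, M an L-structure, and Ω a set of inconsistency pairs for M. Then the Ω-dividing independence relation ⫶Ω satisfies invariance under L-automorphisms of M, monotonicity, base monotonicity, and strong finite character. Moreover, A ⫶Ω_B B and A ⫶Ω_A B hold for all sets A, B ⊆ M. -/
import Mathlib


open FirstOrder

universe u

/-- `b'` realizes `tp(b/C)` in `M`: `b` and `b'` satisfy the same formulas
with parameters from `C`. -/
def RealizesTp (L : FirstOrder.Language.{u, u}) {M : Type u} [L.Structure M]
    {m : ℕ} (C : Set M) (b b' : Fin m → M) : Prop :=
  ∀ (t : ℕ) (θ : L.Formula (Fin m ⊕ Fin t)) (c : Fin t → M), (∀ i, c i ∈ C) →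
    (θ.Realize (Sum.elim b c) ↔ θ.Realize (Sum.elim b' c))

/-- `ψ(ȳ₀,…,ȳ_{k−1})` is a `k`-inconsistency witness for `φ(x̄;ȳ)` with respect to `M`. -/
def IsIncWitness {L : FirstOrder.Language.{u, u}} (M : Type u) [L.Structure M]
    {n m k : ℕ} (φ : L.Formula (Fin n ⊕ Fin m)) (ψ : L.Formula (Fin k × Fin m)) : Prop :=
  ¬ ∃ (a : Fin n → M) (b : Fin k → Fin m → M),
      (∀ i : Fin k, φ.Realize (Sum.elim a (b i))) ∧ ψ.Realize (fun p => b p.1 p.2)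

/-- `φ(x̄;b̄)` `(φ,ψ)`-divides over `C`: there is a sequence of tuples, each realizing
`tp(b̄/C)`, on which `ψ` holds along every strictly increasing selection of `k` indices. -/
def PhiPsiDivides {L : FirstOrder.Language.{u, u}} {M : Type u} [L.Structure M]
    {n m k : ℕ} (φ : L.Formula (Fin n ⊕ Fin m)) (ψ : L.Formula (Fin k × Fin m))
    (b : Fin m → M) (C : Set M) : Prop :=
  ∃ bs : ℕ → Fin m → M, (∀ i, RealizesTp L C b (bs i)) ∧
    ∀ f : Fin k → ℕ, StrictMono f → ψ.Realize (fun p => bs (f p.1) p.2)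

/-- The data of a candidate inconsistency pair `(φ, ψ)`. -/
structure IncPairData (L : FirstOrder.Language.{u, u}) where
  n : ℕ
  m : ℕ
  k : ℕ
  φ : L.Formula (Fin n ⊕ Fin m)
  ψ : L.Formula (Fin k × Fin m)

/-- Ω-dividing independence: `A ⫶Ω_C B` iff no finite tuple from `A` satisfies, over a
tuple from `B∪C`, a formula that `(φ,ψ)`-divides over `C` for some `(φ,ψ) ∈ Ω`. -/
def IndOmega {L : FirstOrder.Language.{u, u}} {M : Type u} [L.Structure M]
    (Ω : Set (IncPairData L)) (A C B : Set M) : Prop :=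
  ¬ ∃ p ∈ Ω, ∃ (a : Fin p.n → M) (b : Fin p.m → M),
      (∀ i, a i ∈ A) ∧ (∀ i, b i ∈ B ∪ C) ∧
      p.φ.Realize (Sum.elim a b) ∧ PhiPsiDivides p.φ p.ψ b C


section Aux

variable {L : FirstOrder.Language.{u, u}} {M : Type u} [L.Structure M]

lemma realizesTp_of_image (g : M ≃[L] M) (C : Set M) {m : ℕ} {b b' : Fin m → M}
    (h : RealizesTp L (⇑g '' C) b b') :
    RealizesTp L C (⇑g.symm ∘ b) (⇑g.symm ∘ b') := by
  intro t θ c hc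
  have key : ∀ d : Fin m → M, Sum.elim d (⇑g ∘ c) = ⇑g ∘ Sum.elim (⇑g.symm ∘ d) c := by
    intro d; funext x; cases x with
    | inl i => simp
    | inr i => simp
  have h1 := h t θ (⇑g ∘ c) (fun i => ⟨c i, hc i, rfl⟩)
  rw [key b, key b'] at h1
  simp only [Language.StrongHomClass.realize_formula g] at h1
  exact h1

lemma eq_of_realizesTp_mem {C : Set M} {m : ℕ} {b b' : Fin m → M}
    (hb : ∀ i, b i ∈ C) (h : RealizesTp L C b b') : b' = b := by
  funext i
  have h1 := h 1 (Language.Term.equal (Language.Term.var (Sum.inl i))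
      (Language.Term.var (Sum.inr 0))) (fun _ => b i) (fun _ => hb i)
  simp only [Language.Formula.realize_equal, Language.Term.realize_var,
    Sum.elim_inl, Sum.elim_inr] at h1
  exact h1.mp trivial

lemma sfc_aux (Ω : Set (IncPairData L)) (A B C : Set M) (p : IncPairData L) (hp : p ∈ Ω)
    (a : Fin p.n → M) (b : Fin p.m → M) (ha : ∀ i, a i ∈ A)
    (hb : ∀ i, b i ∈ B ∪ C) (hφ : p.φ.Realize (Sum.elim a b))
    (hd : PhiPsiDivides p.φ p.ψ b C) :
    ∃ (n m k : ℕ) (a : Fin n → M) (b : Fin m → M) (cc : Fin k → M)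
      (φ : L.Formula (Fin n ⊕ Fin m ⊕ Fin k)),
      (∀ i, a i ∈ A) ∧ (∀ i, b i ∈ B) ∧ (∀ i, cc i ∈ C) ∧
      φ.Realize (Sum.elim a (Sum.elim b cc)) ∧
      ∀ a' : Fin n → M, φ.Realize (Sum.elim a' (Sum.elim b cc)) →
        ¬ IndOmega Ω (Set.range a') C (Set.range b) := by
  classical
  set P : Fin p.m → Prop := fun i => b i ∈ B with hPdef
  let e₁ : {i // P i} ≃ Fin (Fintype.card {i // P i}) := Fintype.equivFin _
  let e₂ : {i // ¬ P i} ≃ Fin (Fintype.card {i // ¬ P i}) := Fintype.equivFin _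
  set bb : Fin (Fintype.card {i // P i}) → M := fun j => b (e₁.symm j) with hbb
  set cc : Fin (Fintype.card {i // ¬ P i}) → M := fun j => b (e₂.symm j) with hcc
  set ρ : Fin p.n ⊕ Fin p.m →
      Fin p.n ⊕ (Fin (Fintype.card {i // P i}) ⊕ Fin (Fintype.card {i // ¬ P i})) :=
    Sum.map id (fun i => if h : P i then Sum.inl (e₁ ⟨i, h⟩) else Sum.inr (e₂ ⟨i, h⟩))
    with hρ
  have hcomp : ∀ a' : Fin p.n → M, Sum.elim a' (Sum.elim bb cc) ∘ ρ = Sum.elim a' b := by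
    intro a'; funext x; cases x with
    | inl j => rfl
    | inr i =>
      simp only [hρ, Function.comp_apply, Sum.map_inr, Sum.elim_inr]
      by_cases h : P i
      · rw [dif_pos h]; simp [hbb]
      · rw [dif_neg h]; simp [hcc]
  refine ⟨p.n, _, _, a, bb, cc, p.φ.relabel ρ, ha, fun j => (e₁.symm j).2,
    fun j => ((hb _).resolve_left (e₂.symm j).2), ?_, ?_⟩
  · rw [Language.Formula.realize_relabel, hcomp a]; exact hφ
  · intro a' ha' hind
    rw [Language.Formula.realize_relabel, hcomp a'] at ha'
    refine hind ⟨p, hp, a', b, fun i => Set.mem_range_self i, ?_, ha', hd⟩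
    intro i
    by_cases h : P i
    · exact Or.inl ⟨e₁ ⟨i, h⟩, by simp [hbb]⟩
    · exact Or.inr ((hb i).resolve_left h)

end Aux

/-- basic properties of Ω-dividing: if `Ω` is a set of inconsistency pairs
for `M`, then `⫶Ω` satisfies invariance under `L`-automorphisms, monotonicity, base
monotonicity and strong finite character; moreover `A ⫶Ω_B B` and `A ⫶Ω_A B` always hold. -/
theorem stmt_11 {L : FirstOrder.Language.{u, u}} {M : Type u} [L.Structure M]
    (Ω : Set (IncPairData L)) (hΩ : ∀ p ∈ Ω, IsIncWitness M p.φ p.ψ) :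
    (∀ (g : M ≃[L] M) (A B C : Set M),
        IndOmega Ω A C B → IndOmega Ω (⇑g '' A) (⇑g '' C) (⇑g '' B)) ∧
    (∀ A B C A' B' : Set M, IndOmega Ω A C B → A' ⊆ A → B' ⊆ B → IndOmega Ω A' C B') ∧
    (∀ A B C D : Set M, D ⊆ C → C ⊆ B → IndOmega Ω A D B → IndOmega Ω A C B) ∧
    (∀ A B C : Set M, ¬ IndOmega Ω A C B →
      ∃ (n m k : ℕ) (a : Fin n → M) (b : Fin m → M) (cc : Fin k → M)
        (φ : L.Formula (Fin n ⊕ Fin m ⊕ Fin k)),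
        (∀ i, a i ∈ A) ∧ (∀ i, b i ∈ B) ∧ (∀ i, cc i ∈ C) ∧
        φ.Realize (Sum.elim a (Sum.elim b cc)) ∧
        ∀ a' : Fin n → M, φ.Realize (Sum.elim a' (Sum.elim b cc)) →
          ¬ IndOmega Ω (Set.range a') C (Set.range b)) ∧
    (∀ A B : Set M, IndOmega Ω A B B ∧ IndOmega Ω A A B) := by
  classical
  refine ⟨?_, ?_, ?_, ?_, ?_⟩
  · -- invariance
    rintro g A B C h ⟨p, hp, a, b, ha, hb, hφ, bs, hre, hψ⟩
    have gg : ∀ (d e : Fin p.n → M) (d' e' : Fin p.m → M), True := fun _ _ _ _ => trivial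
    refine h ⟨p, hp, ⇑g.symm ∘ a, ⇑g.symm ∘ b, ?_, ?_, ?_, fun j => ⇑g.symm ∘ bs j,
      fun j => realizesTp_of_image g C (hre j), ?_⟩
    · intro i; obtain ⟨x, hx, hgx⟩ := ha i
      simpa [← hgx] using hx
    · intro i
      rcases hb i with h1 | h1
      · obtain ⟨x, hx, hgx⟩ := h1; exact Or.inl (by simpa [← hgx] using hx)
      · obtain ⟨x, hx, hgx⟩ := h1; exact Or.inr (by simpa [← hgx] using hx)
    · have : Sum.elim a b = ⇑g ∘ Sum.elim (⇑g.symm ∘ a) (⇑g.symm ∘ b) := by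
        funext x; cases x with
        | inl i => simp
        | inr i => simp
      rw [this, Language.StrongHomClass.realize_formula g] at hφ
      exact hφ
    · intro f hf
      have h1 := hψ f hf
      have : (fun q : Fin p.k × Fin p.m => (⇑g.symm ∘ bs (f q.1)) q.2)
          = ⇑g.symm ∘ (fun q : Fin p.k × Fin p.m => bs (f q.1) q.2) := rfl
      rw [this, Language.StrongHomClass.realize_formula g.symm]
      exact h1
  · -- monotonicity
    rintro A B C A' B' h hA hB ⟨p, hp, a, b, ha, hb, hφ, hd⟩
    exact h ⟨p, hp, a, b, fun i => hA (ha i), fun i => (hb i).imp (fun h' => hB h') id, hφ, hd⟩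
  · -- base monotonicity
    rintro A B C D hDC hCB h ⟨p, hp, a, b, ha, hb, hφ, bs, hre, hψ⟩
    refine h ⟨p, hp, a, b, ha, fun i => Or.inl ((hb i).elim id fun h' => hCB h'), hφ,
      bs, fun j t θ c hc => hre j t θ c fun i => hDC (hc i), hψ⟩
  · -- strong finite character
    intro A B C h
    rw [IndOmega, not_not] at h
    obtain ⟨p, hp, a, b, ha, hb, hφ, hd⟩ := h
    exact sfc_aux Ω A B C p hp a b ha hb hφ hd
  · -- A ⫶ B over B and over A
    intro A B
    constructor
    · rintro ⟨p, hp, a, b, ha, hb, hφ, bs, hre, hψ⟩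
      have hbB : ∀ i, b i ∈ B := fun i => (hb i).elim id id
      have hbs : ∀ j, bs j = b := fun j => eq_of_realizesTp_mem hbB (hre j)
      have hmono : StrictMono (fun i : Fin p.k => (i : ℕ)) := fun _ _ h' => h'
      have h1 := hψ _ hmono
      simp only [hbs] at h1
      exact hΩ p hp ⟨a, fun _ => b, fun _ => hφ, h1⟩
    · rintro ⟨p, hp, a, b, ha, hb, hφ, bs, hre, hψ⟩
      have hkey : ∀ j, p.φ.Realize (Sum.elim a (bs j)) := by
        intro j
        have hswap : ∀ d : Fin p.m → M,
            Sum.elim d a ∘ (Sum.swap : Fin p.n ⊕ Fin p.m → Fin p.m ⊕ Fin p.n)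
              = Sum.elim a d := by
          intro d; funext x; cases x <;> rfl
        have h1 := hre j p.n (p.φ.relabel Sum.swap) a ha
        rw [Language.Formula.realize_relabel, Language.Formula.realize_relabel,
          hswap b, hswap (bs j)] at h1
        exact h1.mp hφ
      have hmono : StrictMono (fun i : Fin p.k => (i : ℕ)) := fun _ _ h' => h'
      exact hΩ p hp ⟨a, fun i => bs i, fun i => hkey i, hψ _ hmono⟩
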